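/- Assume f : ℝ^d → ℝ is measurable and satisfies conditions (0.1) and (0.2). Then, as n → ∞, ϑ_n^{f,A} converges almost surely to ϑ_⋆^{f,A} and v_n^{f,A}(ϑ_n^{f,A}) converges almost surely to v^{f,A}(ϑ_⋆^{f,A}). -/

import Mathlib

open MeasureTheory ProbabilityTheory Filter Real Topology

noncomputable section

/-- Euclidean norm on `ℝ^k`. -/
def nrm {k : ℕ} (x : Fin k → ℝ) : ℝ := Real.sqrt (∑ i, x i ^ 2)

/-- Euclidean inner (dot) product on `ℝ^k`. -/
def dot {k : ℕ} (x y : Fin k → ℝ) : ℝ := ∑ i, x i * y i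

/-- The standard Gaussian measure on `ℝ^d`. -/
def stdGaussian (d : ℕ) : Measure (Fin d → ℝ) :=
  MeasureTheory.Measure.pi fun _ => ProbabilityTheory.gaussianReal 0 1

/-- `v^f(θ) = E(f²(G) e^{-θ·G + |θ|²/2})`. -/
def vF {d : ℕ} (f : (Fin d → ℝ) → ℝ) (θ : Fin d → ℝ) : ℝ :=
  ∫ x, f x ^ 2 * Real.exp (-(dot θ x) + nrm θ ^ 2 / 2) ∂ stdGaussian d

/-- `v^{f,A}(ϑ) = v^f(Aϑ)`. -/
def vFA {d d' : ℕ} (A : Matrix (Fin d) (Fin d') ℝ) (f : (Fin d → ℝ) → ℝ)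
    (ϑ : Fin d' → ℝ) : ℝ :=
  vF f (A.mulVec ϑ)

/-- The sample average approximation `v_n^{f,A}`. -/
def vnFA {d d' : ℕ} {Ω : Type*} (Gs : ℕ → Ω → Fin d → ℝ)
    (A : Matrix (Fin d) (Fin d') ℝ) (f : (Fin d → ℝ) → ℝ) (n : ℕ) (ω : Ω)
    (ϑ : Fin d' → ℝ) : ℝ :=
  (1 / n : ℝ) * ∑ i ∈ Finset.range n,
    f (Gs i ω) ^ 2 * Real.exp (-(dot (A.mulVec ϑ) (Gs i ω)) + nrm (A.mulVec ϑ) ^ 2 / 2)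

/-- The importance sampling estimator `M_n(θ, g)`. -/
def Mn {d : ℕ} {Ω : Type*} (Gs : ℕ → Ω → Fin d → ℝ) (n : ℕ) (θ : Fin d → ℝ)
    (g : (Fin d → ℝ) → ℝ) (ω : Ω) : ℝ :=
  (1 / n : ℝ) * ∑ i ∈ Finset.range n,
    g (Gs i ω + θ) * Real.exp (-(dot θ (Gs i ω)) - nrm θ ^ 2 / 2)

/-- The Hölder class `ℋ_α`. -/
def MemH {d : ℕ} (α : ℝ) (g : (Fin d → ℝ) → ℝ) : Prop :=
  ∃ β ∈ Set.Ico (0 : ℝ) 2, ∃ lam > (0 : ℝ),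
    (∀ x, |g x| ≤ lam * Real.exp (nrm x ^ β)) ∧
    ∀ x y, |g x - g y| ≤ lam * Real.exp (max (nrm x ^ β) (nrm y ^ β)) * nrm (x - y) ^ α

/-- `𝒜`-monotonicity of a function on `ℝ^d` for a vector `𝒜 ∈ ℝ^d`. -/
def AMonotonic {d : ℕ} (𝒜 : Fin d → ℝ) (h : (Fin d → ℝ) → ℝ) : Prop :=
  (∀ x, Monotone fun ϑ : ℝ => h (x + ϑ • 𝒜)) ∨ (∀ x, Antitone fun ϑ : ℝ => h (x + ϑ • 𝒜))

/-- The class `𝒱_𝒜`. -/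
def MemV {d : ℕ} (𝒜 : Fin d → ℝ) (h : (Fin d → ℝ) → ℝ) : Prop :=
  ∃ g₁ g₂ : (Fin d → ℝ) → ℝ, h = g₁ + g₂ ∧ AMonotonic 𝒜 g₁ ∧ AMonotonic 𝒜 g₂ ∧
    ∃ lam > (0 : ℝ), ∃ β ∈ Set.Ico (0 : ℝ) 2,
      ∀ x, |g₁ x| ≤ lam * Real.exp (nrm x ^ β) ∧ |g₂ x| ≤ lam * Real.exp (nrm x ^ β)

/-! ### Auxiliary lemmas on `nrm` and `dot` -/

lemma nrm_nonneg {k : ℕ} (x : Fin k → ℝ) : 0 ≤ nrm x := Real.sqrt_nonneg _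

lemma nrm_sq {k : ℕ} (x : Fin k → ℝ) : nrm x ^ 2 = ∑ i, x i ^ 2 :=
  Real.sq_sqrt (Finset.sum_nonneg fun _ _ => sq_nonneg _)

lemma nrm_eq_norm {k : ℕ} (x : Fin k → ℝ) :
    nrm x = ‖(WithLp.equiv 2 (Fin k → ℝ)).symm x‖ := by
  rw [EuclideanSpace.norm_eq]
  simp [nrm, Real.norm_eq_abs, sq_abs]

lemma nrm_add_le {k : ℕ} (x y : Fin k → ℝ) : nrm (x + y) ≤ nrm x + nrm y := by
  simp only [nrm_eq_norm]
  rw [show (WithLp.equiv 2 (Fin k → ℝ)).symm (x + y)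
      = (WithLp.equiv 2 (Fin k → ℝ)).symm x + (WithLp.equiv 2 (Fin k → ℝ)).symm y from rfl]
  exact norm_add_le _ _

lemma abs_dot_le {k : ℕ} (x y : Fin k → ℝ) : |dot x y| ≤ nrm x * nrm y := by
  have h := abs_real_inner_le_norm ((WithLp.equiv 2 (Fin k → ℝ)).symm x)
    ((WithLp.equiv 2 (Fin k → ℝ)).symm y)
  rw [PiLp.inner_apply] at h
  have e : dot x y = ∑ i, y i * x i := Finset.sum_congr rfl fun i _ => mul_comm _ _
  rw [e]
  simpa [nrm_eq_norm, RCLike.inner_apply, conj_trivial] using h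

lemma coord_le_nrm {k : ℕ} (x : Fin k → ℝ) (j : Fin k) : |x j| ≤ nrm x := by
  rw [nrm, ← Real.sqrt_sq_eq_abs]
  exact Real.sqrt_le_sqrt (Finset.single_le_sum (fun i _ => sq_nonneg (x i)) (Finset.mem_univ j))

lemma norm_le_nrm {k : ℕ} (x : Fin k → ℝ) : ‖x‖ ≤ nrm x := by
  refine (pi_norm_le_iff_of_nonneg (nrm_nonneg x)).2 fun j => ?_
  rw [Real.norm_eq_abs]; exact coord_le_nrm x j

lemma nrm_le_sqrt_card_norm {k : ℕ} (x : Fin k → ℝ) : nrm x ≤ Real.sqrt k * ‖x‖ := by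
  rw [nrm, ← Real.sqrt_sq (norm_nonneg x), ← Real.sqrt_mul (Nat.cast_nonneg k)]
  apply Real.sqrt_le_sqrt
  calc ∑ i, x i ^ 2 ≤ ∑ _i : Fin k, ‖x‖ ^2 := by
        refine Finset.sum_le_sum fun i _ => ?_
        have := norm_le_pi_norm x i
        have h0 : (0:ℝ) ≤ ‖x i‖ := norm_nonneg _
        have h2 : x i ^2 = ‖x i‖^2 := by rw [Real.norm_eq_abs, sq_abs]
        nlinarith [this]
    _ = k * ‖x‖^2 := by simp [Finset.sum_const, mul_comm]

lemma nrm_le_sum_abs {k : ℕ} (x : Fin k → ℝ) : nrm x ≤ ∑ i, |x i| := by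
  rw [nrm, ← Real.sqrt_sq (Finset.sum_nonneg fun i (_ : i ∈ Finset.univ) => abs_nonneg (x i))]
  apply Real.sqrt_le_sqrt
  calc ∑ i, x i ^2 = ∑ i, |x i|^2 := by simp [sq_abs]
    _ ≤ (∑ i, |x i|)^2 := by
        rw [sq (∑ i, |x i|), Finset.sum_mul]
        refine Finset.sum_le_sum fun i _ => ?_
        rw [sq]
        exact mul_le_mul_of_nonneg_left
          (Finset.single_le_sum (fun j (_ : j ∈ Finset.univ) => abs_nonneg (x j))
            (Finset.mem_univ i)) (abs_nonneg _)

lemma measurable_nrm {k : ℕ} : Measurable (fun x : Fin k → ℝ => nrm x) := by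
  unfold nrm
  exact (Finset.measurable_sum _ fun i _ => ((measurable_pi_apply i).pow_const 2)).sqrt

lemma measurable_dot {k : ℕ} (θ : Fin k → ℝ) : Measurable (fun x : Fin k → ℝ => dot θ x) := by
  unfold dot
  exact Finset.measurable_sum _ fun i _ => (measurable_const.mul (measurable_pi_apply i))

lemma exists_mulVec_upper {d k : ℕ} (A : Matrix (Fin d) (Fin k) ℝ) :
    ∃ K ≥ 0, ∀ v : Fin k → ℝ, nrm (A.mulVec v) ≤ K * nrm v := by
  set T := LinearMap.toContinuousLinearMap (Matrix.mulVecLin A)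
  refine ⟨Real.sqrt d * ‖T‖, by positivity, fun v => ?_⟩
  have h1 : nrm (A.mulVec v) ≤ Real.sqrt d * ‖A.mulVec v‖ := nrm_le_sqrt_card_norm _
  have h2 : ‖A.mulVec v‖ = ‖T v‖ := rfl
  have h3 : ‖T v‖ ≤ ‖T‖ * ‖v‖ := T.le_opNorm v
  have h4 : ‖v‖ ≤ nrm v := norm_le_nrm v
  have h5 : (0:ℝ) ≤ Real.sqrt d := Real.sqrt_nonneg _
  have h6 : (0:ℝ) ≤ ‖T‖ := norm_nonneg _
  calc nrm (A.mulVec v) ≤ Real.sqrt d * ‖T v‖ := by rw [← h2]; exact h1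
    _ ≤ Real.sqrt d * (‖T‖ * ‖v‖) := mul_le_mul_of_nonneg_left h3 h5
    _ = Real.sqrt d * ‖T‖ * ‖v‖ := by ring
    _ ≤ Real.sqrt d * ‖T‖ * nrm v := mul_le_mul_of_nonneg_left h4 (mul_nonneg h5 h6)

lemma exists_mulVec_lower {d k : ℕ} (A : Matrix (Fin d) (Fin k) ℝ) (hA : A.rank = k) :
    ∃ c > 0, ∀ v : Fin k → ℝ, nrm v ≤ c * nrm (A.mulVec v) := by
  have hker : LinearMap.ker (Matrix.mulVecLin A) = ⊥ := by
    have hrn := LinearMap.finrank_range_add_finrank_ker (Matrix.mulVecLin A)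
    rw [Module.finrank_pi ℝ] at hrn
    have hr : Module.finrank ℝ (LinearMap.range (Matrix.mulVecLin A)) = k := hA
    rw [hr, Fintype.card_fin] at hrn
    have h0 : Module.finrank ℝ (LinearMap.ker (Matrix.mulVecLin A)) = 0 := by omega
    exact Submodule.finrank_eq_zero.1 h0
  obtain ⟨K, hK0, hK⟩ := LinearMap.exists_antilipschitzWith (Matrix.mulVecLin A) hker
  refine ⟨Real.sqrt k * K + 1, by positivity, fun v => ?_⟩
  have h1 : ‖v‖ ≤ K * ‖A.mulVec v‖ := by
    have := hK.le_mul_dist v 0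
    simpa [dist_eq_norm] using this
  have h2 : nrm v ≤ Real.sqrt k * ‖v‖ := nrm_le_sqrt_card_norm v
  have h3 : ‖A.mulVec v‖ ≤ nrm (A.mulVec v) := norm_le_nrm _
  have h4 : (0:ℝ) ≤ Real.sqrt k := Real.sqrt_nonneg _
  have h5 : (0:ℝ) ≤ (K:ℝ) := K.2
  have h6 : (0:ℝ) ≤ nrm (A.mulVec v) := nrm_nonneg _
  calc nrm v ≤ Real.sqrt k * ‖v‖ := h2
    _ ≤ Real.sqrt k * (K * ‖A.mulVec v‖) := mul_le_mul_of_nonneg_left h1 h4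
    _ = Real.sqrt k * K * ‖A.mulVec v‖ := by ring
    _ ≤ Real.sqrt k * K * nrm (A.mulVec v) :=
        mul_le_mul_of_nonneg_left h3 (mul_nonneg h4 h5)
    _ ≤ (Real.sqrt k * K + 1) * nrm (A.mulVec v) := by nlinarith

lemma sqrt_exp' (x : ℝ) : Real.sqrt (Real.exp x) = Real.exp (x/2) := by
  rw [show Real.exp x = Real.exp (x/2) * Real.exp (x/2) by rw [← Real.exp_add]; ring_nf,
    Real.sqrt_mul_self (Real.exp_nonneg _)]

/-! ### Exponent identities -/

lemma exponent_mid {d : ℕ} (x α β : Fin d → ℝ) :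
    -(dot ((2:ℝ)⁻¹ • (α + β)) x) + nrm ((2:ℝ)⁻¹ • (α + β)) ^ 2 / 2
      = -(nrm (α - β) ^ 2 / 8)
        + ((-(dot α x) + nrm α ^ 2 / 2) + (-(dot β x) + nrm β ^ 2 / 2)) / 2 := by
  simp only [dot, nrm_sq, Pi.smul_apply, Pi.add_apply, Pi.sub_apply, smul_eq_mul]
  have e1 : (∑ i, 2⁻¹ * (α i + β i) * x i)
      = 2⁻¹ * ((∑ i, α i * x i) + ∑ i, β i * x i) := by
    rw [← Finset.sum_add_distrib, Finset.mul_sum]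
    exact Finset.sum_congr rfl fun i _ => by ring
  have e2 : (∑ i, (2⁻¹ * (α i + β i)) ^ 2)
      = 4⁻¹ * ((2*(∑ i, α i ^ 2) + 2*(∑ i, β i ^ 2)) - ∑ i, (α i - β i) ^ 2) := by
    rw [Finset.mul_sum, Finset.mul_sum, ← Finset.sum_add_distrib, ← Finset.sum_sub_distrib,
      Finset.mul_sum]
    exact Finset.sum_congr rfl fun i _ => by ring
  rw [e1, e2]; ring

lemma exponent_comb {d : ℕ} (x α β : Fin d → ℝ) {a b : ℝ} (hab : a + b = 1) :
    -(dot (a • α + b • β) x) + nrm (a • α + b • β) ^ 2 / 2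
      = a * (-(dot α x) + nrm α ^ 2 / 2) + b * (-(dot β x) + nrm β ^ 2 / 2)
        - a * b * (∑ i, (α i - β i) ^ 2) / 2 := by
  have hb : b = 1 - a := by linarith
  subst hb
  simp only [dot, nrm_sq, Pi.smul_apply, Pi.add_apply, Pi.sub_apply, smul_eq_mul]
  have e1 : (∑ i, (a * α i + (1-a) * β i) * x i)
      = a * (∑ i, α i * x i) + (1-a) * (∑ i, β i * x i) := by
    rw [Finset.mul_sum, Finset.mul_sum, ← Finset.sum_add_distrib]
    exact Finset.sum_congr rfl fun i _ => by ring
  have e2 : (∑ i, (a * α i + (1-a) * β i) ^ 2)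
      = a * (∑ i, α i ^ 2) + (1-a) * (∑ i, β i ^ 2)
        - a * (1-a) * (∑ i, (α i - β i) ^ 2) := by
    rw [Finset.mul_sum, Finset.mul_sum, Finset.mul_sum, ← Finset.sum_add_distrib,
      ← Finset.sum_sub_distrib]
    exact Finset.sum_congr rfl fun i _ => by ring
  rw [e1, e2]; ring

/-! ### The integrand `Fterm` -/

/-- The integrand `f(x)² e^{-θ·x + |θ|²/2}`. -/
def Fterm {d : ℕ} (f : (Fin d → ℝ) → ℝ) (x θ : Fin d → ℝ) : ℝ :=
  f x ^ 2 * Real.exp (-(dot θ x) + nrm θ ^ 2 / 2)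

lemma Fterm_nonneg {d : ℕ} (f : (Fin d → ℝ) → ℝ) (x θ : Fin d → ℝ) : 0 ≤ Fterm f x θ :=
  mul_nonneg (sq_nonneg _) (Real.exp_nonneg _)

lemma Fterm_mid {d : ℕ} (f : (Fin d → ℝ) → ℝ) (x α β : Fin d → ℝ) :
    Fterm f x ((2:ℝ)⁻¹ • (α + β))
      = Real.exp (-(nrm (α - β) ^ 2 / 8))
        * (Real.sqrt (Fterm f x α) * Real.sqrt (Fterm f x β)) := by
  unfold Fterm
  rw [exponent_mid, Real.sqrt_mul (sq_nonneg _), Real.sqrt_mul (sq_nonneg _),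
    Real.sqrt_sq_eq_abs, sqrt_exp', sqrt_exp', Real.exp_add]
  have : |f x| * Real.exp ((-(dot α x) + nrm α ^ 2 / 2)/2)
      * (|f x| * Real.exp ((-(dot β x) + nrm β ^ 2 / 2)/2))
      = f x ^2 * Real.exp (((-(dot α x) + nrm α ^ 2 / 2) + (-(dot β x) + nrm β ^ 2 / 2))/2) := by
    rw [show ((-(dot α x) + nrm α ^ 2 / 2) + (-(dot β x) + nrm β ^ 2 / 2))/2
      = (-(dot α x) + nrm α ^ 2 / 2)/2 + (-(dot β x) + nrm β ^ 2 / 2)/2 by ring,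
      Real.exp_add, show f x ^2 = |f x| * |f x| from by rw [abs_mul_abs_self]; ring]
    ring
  rw [this]; ring

lemma Fterm_comb {d : ℕ} (f : (Fin d → ℝ) → ℝ) (x α β : Fin d → ℝ) {a b : ℝ}
    (ha : 0 ≤ a) (hb : 0 ≤ b) (hab : a + b = 1) :
    Fterm f x (a • α + b • β) ≤ a * Fterm f x α + b * Fterm f x β := by
  unfold Fterm
  have key : Real.exp (-(dot (a • α + b • β) x) + nrm (a • α + b • β) ^ 2 / 2)
      ≤ a * Real.exp (-(dot α x) + nrm α ^ 2 / 2) + b * Real.exp (-(dot β x) + nrm β ^ 2 / 2) := by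
    rw [exponent_comb x α β hab]
    set Ea := -(dot α x) + nrm α ^ 2 / 2
    set Eb := -(dot β x) + nrm β ^ 2 / 2
    have h1 : Real.exp (a * Ea + b * Eb - a * b * (∑ i, (α i - β i) ^ 2) / 2)
        ≤ Real.exp (a * Ea + b * Eb) := by
      apply Real.exp_le_exp.2
      have : 0 ≤ a * b * (∑ i, (α i - β i) ^ 2) / 2 := by
        have : (0:ℝ) ≤ ∑ i, (α i - β i) ^ 2 := Finset.sum_nonneg fun i _ => sq_nonneg _
        positivity
      linarith
    have h2 : Real.exp (a * Ea + b * Eb) = Real.exp Ea ^ a * Real.exp Eb ^ b := by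
      rw [← Real.exp_mul, ← Real.exp_mul, ← Real.exp_add]; ring_nf
    have h3 : Real.exp Ea ^ a * Real.exp Eb ^ b ≤ a * Real.exp Ea + b * Real.exp Eb :=
      Real.geom_mean_le_arith_mean2_weighted ha hb (Real.exp_nonneg _) (Real.exp_nonneg _) hab
    calc _ ≤ Real.exp (a * Ea + b * Eb) := h1
      _ = _ := h2
      _ ≤ _ := h3
  calc f x ^2 * Real.exp (-(dot (a • α + b • β) x) + nrm (a • α + b • β) ^ 2 / 2)
      ≤ f x ^2 * (a * Real.exp (-(dot α x) + nrm α ^ 2 / 2)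
          + b * Real.exp (-(dot β x) + nrm β ^ 2 / 2)) :=
        mul_le_mul_of_nonneg_left key (sq_nonneg _)
    _ = _ := by ring

lemma Fterm_floor {d : ℕ} (f : (Fin d → ℝ) → ℝ) (x θ : Fin d → ℝ) :
    f x ^ 2 * Real.exp (-(nrm x ^ 2) / 2) ≤ Fterm f x θ := by
  unfold Fterm
  apply mul_le_mul_of_nonneg_left _ (sq_nonneg _)
  apply Real.exp_le_exp.2
  have h1 := abs_dot_le θ x
  have h2 := sq_nonneg (nrm θ - nrm x)
  have h3 := abs_le.1 h1
  nlinarith [h3.1, h3.2]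

lemma Fterm_upper {d : ℕ} (f : (Fin d → ℝ) → ℝ) (x θ : Fin d → ℝ) {a0 : ℝ}
    (ha0 : nrm θ ≤ a0) :
    Fterm f x θ ≤ Real.exp (a0 ^ 2 / 2) * (f x ^ 2 * Real.exp (a0 * nrm x)) := by
  unfold Fterm
  rw [show Real.exp (a0 ^2/2) * (f x ^2 * Real.exp (a0 * nrm x))
    = f x ^2 * Real.exp (a0 * nrm x + a0 ^2/2) by rw [Real.exp_add]; ring]
  apply mul_le_mul_of_nonneg_left _ (sq_nonneg _)
  apply Real.exp_le_exp.2
  have h1 := abs_dot_le θ x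
  have h3 := abs_le.1 h1
  have h4 := nrm_nonneg θ
  have h5 := nrm_nonneg x
  have h6 : nrm θ * nrm x ≤ a0 * nrm x := mul_le_mul_of_nonneg_right ha0 h5
  nlinarith [h3.1, h3.2]

lemma measurable_Fterm {d : ℕ} {f : (Fin d → ℝ) → ℝ} (hf : Measurable f) (θ : Fin d → ℝ) :
    Measurable (fun x => Fterm f x θ) := by
  unfold Fterm
  exact (hf.pow_const 2).mul
    (Real.measurable_exp.comp (((measurable_dot θ).neg).add measurable_const))

/-! ### Sample averages -/

/-- Sample average of `Fterm` along the sample path `x`. -/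
def samp {d k : ℕ} (f : (Fin d → ℝ) → ℝ) (A : Matrix (Fin d) (Fin k) ℝ)
    (x : ℕ → Fin d → ℝ) (n : ℕ) (ϑ : Fin k → ℝ) : ℝ :=
  (1 / n : ℝ) * ∑ i ∈ Finset.range n, Fterm f (x i) (A.mulVec ϑ)

variable {d k : ℕ} (f : (Fin d → ℝ) → ℝ) (A : Matrix (Fin d) (Fin k) ℝ)
  (x : ℕ → Fin d → ℝ) (n : ℕ)

lemma samp_nonneg (ϑ : Fin k → ℝ) : 0 ≤ samp f A x n ϑ :=
  mul_nonneg (by positivity) (Finset.sum_nonneg fun i _ => Fterm_nonneg _ _ _)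

lemma samp_floor (ϑ : Fin k → ℝ) :
    (1 / n : ℝ) * ∑ i ∈ Finset.range n, f (x i) ^ 2 * Real.exp (-(nrm (x i) ^ 2) / 2)
      ≤ samp f A x n ϑ :=
  mul_le_mul_of_nonneg_left
    (Finset.sum_le_sum fun i _ => Fterm_floor f (x i) _) (by positivity)

lemma samp_upper {a0 : ℝ} {ϑ : Fin k → ℝ} (h : nrm (A.mulVec ϑ) ≤ a0) :
    samp f A x n ϑ ≤ Real.exp (a0 ^ 2 / 2)
      * ((1 / n : ℝ) * ∑ i ∈ Finset.range n, f (x i) ^ 2 * Real.exp (a0 * nrm (x i))) := by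
  unfold samp
  calc (1 / n : ℝ) * ∑ i ∈ Finset.range n, Fterm f (x i) (A.mulVec ϑ)
      ≤ (1 / n : ℝ) * ∑ i ∈ Finset.range n,
          Real.exp (a0 ^ 2 / 2) * (f (x i) ^ 2 * Real.exp (a0 * nrm (x i))) :=
        mul_le_mul_of_nonneg_left
          (Finset.sum_le_sum fun i _ => Fterm_upper f (x i) _ h) (by positivity)
    _ = _ := by rw [← Finset.mul_sum]; ring

lemma samp_convex (u v : Fin k → ℝ) {a b : ℝ} (ha : 0 ≤ a) (hb : 0 ≤ b) (hab : a + b = 1) :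
    samp f A x n (a • u + b • v) ≤ a * samp f A x n u + b * samp f A x n v := by
  unfold samp
  have hmv : A.mulVec (a • u + b • v) = a • A.mulVec u + b • A.mulVec v := by
    rw [Matrix.mulVec_add, Matrix.mulVec_smul, Matrix.mulVec_smul]
  rw [hmv]
  calc (1 / n : ℝ) * ∑ i ∈ Finset.range n, Fterm f (x i) (a • A.mulVec u + b • A.mulVec v)
      ≤ (1 / n : ℝ) * ∑ i ∈ Finset.range n,
          (a * Fterm f (x i) (A.mulVec u) + b * Fterm f (x i) (A.mulVec v)) :=
        mul_le_mul_of_nonneg_left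
          (Finset.sum_le_sum fun i _ => Fterm_comb f (x i) _ _ ha hb hab) (by positivity)
    _ = _ := by
        rw [Finset.sum_add_distrib, ← Finset.mul_sum, ← Finset.mul_sum]; ring

lemma samp_star (u v : Fin k → ℝ) :
    samp f A x n ((2:ℝ)⁻¹ • (u + v))
      ≤ Real.exp (-(nrm (A.mulVec (u - v)) ^ 2 / 8))
        * (Real.sqrt (samp f A x n u) * Real.sqrt (samp f A x n v)) := by
  unfold samp
  have hmv : A.mulVec ((2:ℝ)⁻¹ • (u + v)) = (2:ℝ)⁻¹ • (A.mulVec u + A.mulVec v) := by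
    rw [Matrix.mulVec_smul, Matrix.mulVec_add]
  have hmv2 : A.mulVec (u - v) = A.mulVec u - A.mulVec v := Matrix.mulVec_sub A u v
  rw [hmv, hmv2]
  set Sa := ∑ i ∈ Finset.range n, Fterm f (x i) (A.mulVec u) with hSa
  set Sb := ∑ i ∈ Finset.range n, Fterm f (x i) (A.mulVec v) with hSb
  have hSa0 : 0 ≤ Sa := Finset.sum_nonneg fun i _ => Fterm_nonneg _ _ _
  have hSb0 : 0 ≤ Sb := Finset.sum_nonneg fun i _ => Fterm_nonneg _ _ _
  have cs : (∑ i ∈ Finset.range n,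
      Real.sqrt (Fterm f (x i) (A.mulVec u)) * Real.sqrt (Fterm f (x i) (A.mulVec v)))
      ≤ Real.sqrt Sa * Real.sqrt Sb := by
    have h2 := Finset.sum_sq_le_sum_mul_sum_of_sq_eq_mul (Finset.range n)
      (r := fun i => Real.sqrt (Fterm f (x i) (A.mulVec u)) * Real.sqrt (Fterm f (x i) (A.mulVec v)))
      (f := fun i => Fterm f (x i) (A.mulVec u)) (g := fun i => Fterm f (x i) (A.mulVec v))
      (fun i _ => Fterm_nonneg _ _ _) (fun i _ => Fterm_nonneg _ _ _)
      (fun i _ => by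
        rw [mul_pow, Real.sq_sqrt (Fterm_nonneg _ _ _), Real.sq_sqrt (Fterm_nonneg _ _ _)])
    have hr0 : 0 ≤ ∑ i ∈ Finset.range n,
        Real.sqrt (Fterm f (x i) (A.mulVec u)) * Real.sqrt (Fterm f (x i) (A.mulVec v)) :=
      Finset.sum_nonneg fun i _ => mul_nonneg (Real.sqrt_nonneg _) (Real.sqrt_nonneg _)
    calc (∑ i ∈ Finset.range n, Real.sqrt (Fterm f (x i) (A.mulVec u))
            * Real.sqrt (Fterm f (x i) (A.mulVec v)))
        = Real.sqrt ((∑ i ∈ Finset.range n, Real.sqrt (Fterm f (x i) (A.mulVec u))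
            * Real.sqrt (Fterm f (x i) (A.mulVec v)))^2) := (Real.sqrt_sq hr0).symm
      _ ≤ Real.sqrt (Sa * Sb) := Real.sqrt_le_sqrt h2
      _ = Real.sqrt Sa * Real.sqrt Sb := Real.sqrt_mul hSa0 _
  have expand : (∑ i ∈ Finset.range n, Fterm f (x i) ((2:ℝ)⁻¹ • (A.mulVec u + A.mulVec v)))
      = Real.exp (-(nrm (A.mulVec u - A.mulVec v) ^ 2 / 8))
        * ∑ i ∈ Finset.range n,
          Real.sqrt (Fterm f (x i) (A.mulVec u)) * Real.sqrt (Fterm f (x i) (A.mulVec v)) := by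
    rw [Finset.mul_sum]
    exact Finset.sum_congr rfl fun i _ => Fterm_mid f (x i) _ _
  rw [expand]
  have h1n : (0:ℝ) ≤ 1/n := by positivity
  have key : (1/n : ℝ) * (Real.sqrt Sa * Real.sqrt Sb)
      = Real.sqrt ((1/n : ℝ) * Sa) * Real.sqrt ((1/n : ℝ) * Sb) := by
    rw [Real.sqrt_mul h1n, Real.sqrt_mul h1n]
    rw [show Real.sqrt (1/n : ℝ) * Sa.sqrt * (Real.sqrt (1/n : ℝ) * Sb.sqrt)
      = (Real.sqrt (1/n:ℝ) * Real.sqrt (1/n:ℝ)) * (Sa.sqrt * Sb.sqrt) by ring,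
      Real.mul_self_sqrt h1n]
  calc (1/n : ℝ) * (Real.exp (-(nrm (A.mulVec u - A.mulVec v) ^ 2 / 8)) * ∑ i ∈ Finset.range n,
          Real.sqrt (Fterm f (x i) (A.mulVec u)) * Real.sqrt (Fterm f (x i) (A.mulVec v)))
      ≤ (1/n : ℝ) * (Real.exp (-(nrm (A.mulVec u - A.mulVec v) ^ 2 / 8))
          * (Real.sqrt Sa * Real.sqrt Sb)) := by
        apply mul_le_mul_of_nonneg_left _ h1n
        exact mul_le_mul_of_nonneg_left cs (Real.exp_nonneg _)
    _ = Real.exp (-(nrm (A.mulVec u - A.mulVec v) ^ 2 / 8))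
          * ((1/n : ℝ) * (Real.sqrt Sa * Real.sqrt Sb)) := by ring
    _ = _ := by rw [key]

/-- Convexity-based Lipschitz bound. -/
lemma lip_of_convex {k : ℕ} (ψ : (Fin k → ℝ) → ℝ)
    (hcvx : ∀ (u v : Fin k → ℝ) (a b : ℝ), 0 ≤ a → 0 ≤ b → a + b = 1 →
      ψ (a • u + b • v) ≤ a * ψ u + b * ψ v)
    (hpos : ∀ u, 0 ≤ ψ u) {c : Fin k → ℝ} {R' M : ℝ} (hM : 0 ≤ M)
    (hbd : ∀ ζ, ‖ζ - c‖ ≤ R' + 1 → ψ ζ ≤ M)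
    {x y : Fin k → ℝ} (hx : ‖x - c‖ ≤ R') (hy : ‖y - c‖ ≤ R') :
    ψ y - ψ x ≤ M * ‖y - x‖ := by
  rcases eq_or_ne y x with h | h
  · simp [h, hM]
  have hr : 0 < ‖y - x‖ := by
    rw [norm_pos_iff]; intro h0; exact h (by rwa [sub_eq_zero] at h0)
  set r := ‖y - x‖ with hrdef
  set z := y + r⁻¹ • (y - x) with hz
  have hzc : ‖z - c‖ ≤ R' + 1 := by
    have : z - c = (y - c) + r⁻¹ • (y - x) := by rw [hz]; abel
    rw [this]
    calc ‖(y - c) + r⁻¹ • (y - x)‖ ≤ ‖y - c‖ + ‖r⁻¹ • (y - x)‖ := norm_add_le _ _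
      _ = ‖y - c‖ + r⁻¹ * r := by
          rw [norm_smul, Real.norm_eq_abs, abs_of_pos (by positivity)]
      _ ≤ R' + 1 := by rw [inv_mul_cancel₀ (ne_of_gt hr)]; linarith
  have ha : (0:ℝ) ≤ 1/(r+1) := by positivity
  have hb : (0:ℝ) ≤ r/(r+1) := by positivity
  have hab : 1/(r+1) + r/(r+1) = 1 := by field_simp; ring
  have hcomb : (1/(r+1)) • x + (r/(r+1)) • z = y := by
    rw [hz]
    funext i
    simp only [Pi.add_apply, Pi.smul_apply, Pi.sub_apply, smul_eq_mul]
    field_simp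
    ring
  have h1 : ψ y ≤ (1/(r+1)) * ψ x + (r/(r+1)) * ψ z := by
    rw [← hcomb]; exact hcvx x z _ _ ha hb hab
  have h2 : ψ z ≤ M := hbd z hzc
  have h3 : r/(r+1) ≤ r := by
    rw [div_le_iff₀ (by positivity)]
    nlinarith
  have h4 : (1/(r+1)) * ψ x ≤ ψ x := by
    have := hpos x
    have h5 : 1/(r+1) ≤ 1 := by rw [div_le_one (by positivity)]; linarith
    nlinarith
  calc ψ y - ψ x ≤ (1/(r+1)) * ψ x + (r/(r+1)) * ψ z - ψ x := by linarith
    _ ≤ (r/(r+1)) * ψ z := by linarith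
    _ ≤ (r/(r+1)) * M := mul_le_mul_of_nonneg_left h2 hb
    _ ≤ r * M := mul_le_mul_of_nonneg_right h3 hM
    _ = M * r := by ring

/-! ### Probability layer -/

instance stdGaussian_prob (d : ℕ) : IsProbabilityMeasure (stdGaussian d) := by
  unfold _root_.stdGaussian; infer_instance

/-- SLLN specialised to our setting. -/
lemma slln {d : ℕ} {Ω : Type*} [MeasurableSpace Ω] (P : Measure Ω) [IsProbabilityMeasure P]
    (Gs : ℕ → Ω → Fin d → ℝ) (hGmeas : ∀ i, Measurable (Gs i))
    (hGindep : iIndepFun Gs P)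
    (hGlaw : ∀ i, Measure.map (Gs i) P = stdGaussian d)
    (g : (Fin d → ℝ) → ℝ) (hg : Measurable g) (hgi : Integrable g (stdGaussian d)) :
    ∀ᵐ ω ∂P, Tendsto (fun n : ℕ => (1 / n : ℝ) * ∑ i ∈ Finset.range n, g (Gs i ω)) atTop
      (𝓝 (∫ x, g x ∂ stdGaussian d)) := by
  have hint : Integrable (fun ω => g (Gs 0 ω)) P := by
    rw [← hGlaw 0] at hgi
    exact (integrable_map_measure hg.aestronglyMeasurable (hGmeas 0).aemeasurable).1 hgi
  have hindep : Pairwise (Function.onFun (IndepFun · · P) (fun i ω => g (Gs i ω))) := by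
    intro i j hij
    exact (hGindep.comp (fun _ => g) (fun _ => hg)).indepFun hij
  have hident : ∀ i, IdentDistrib (fun ω => g (Gs i ω)) (fun ω => g (Gs 0 ω)) P P := by
    intro i
    have : IdentDistrib (Gs i) (Gs 0) P P :=
      ⟨(hGmeas i).aemeasurable, (hGmeas 0).aemeasurable, by rw [hGlaw i, hGlaw 0]⟩
    exact this.comp hg
  have h := strong_law_ae_real (fun i ω => g (Gs i ω)) hint hindep hident
  have hmean : P[fun ω => g (Gs 0 ω)] = ∫ x, g x ∂ stdGaussian d := by
    rw [← hGlaw 0, integral_map (hGmeas 0).aemeasurable hg.aestronglyMeasurable]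
  filter_upwards [h] with ω hω
  rw [hmean] at hω
  convert hω using 2 with n
  rw [one_div, inv_mul_eq_div]

section Integrability
variable {d : ℕ} {μ : Measure (Fin d → ℝ)} {f : (Fin d → ℝ) → ℝ}

lemma int_Fterm (hf : Measurable f)
    (h02 : ∀ θ : Fin d → ℝ, Integrable (fun x => f x ^ 2 * Real.exp (-(dot θ x))) μ)
    (θ : Fin d → ℝ) : Integrable (fun x => Fterm f x θ) μ := by
  have := (h02 θ).mul_const (Real.exp (nrm θ ^ 2 / 2))
  refine this.congr (Filter.Eventually.of_forall fun x => ?_)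
  unfold Fterm
  simp only [Real.exp_add]; ring

lemma int_floor (hf : Measurable f)
    (h02 : ∀ θ : Fin d → ℝ, Integrable (fun x => f x ^ 2 * Real.exp (-(dot θ x))) μ) :
    Integrable (fun x => f x ^ 2 * Real.exp (-(nrm x ^ 2) / 2)) μ := by
  have h0 : Integrable (fun x => f x ^ 2) μ := by
    have := h02 0
    refine this.congr (Filter.Eventually.of_forall fun x => ?_)
    simp [dot]
  refine h0.mono' ?_ (Filter.Eventually.of_forall fun x => ?_)
  · exact ((hf.pow_const 2).mul
      (Real.measurable_exp.comp
        (((measurable_nrm.pow_const 2).neg).div_const 2))).aestronglyMeasurable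
  · rw [Real.norm_eq_abs, abs_of_nonneg (mul_nonneg (sq_nonneg _) (Real.exp_nonneg _))]
    have h1 : Real.exp (-(nrm x ^ 2) / 2) ≤ 1 := by
      rw [show (1:ℝ) = Real.exp 0 from (Real.exp_zero).symm]
      apply Real.exp_le_exp.2
      have := sq_nonneg (nrm x); linarith
    nlinarith [sq_nonneg (f x)]

lemma int_upper (hf : Measurable f)
    (h02 : ∀ θ : Fin d → ℝ, Integrable (fun x => f x ^ 2 * Real.exp (-(dot θ x))) μ)
    {a0 : ℝ} (ha0 : 0 ≤ a0) :
    Integrable (fun x => f x ^ 2 * Real.exp (a0 * nrm x)) μ := by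
  classical
  set D : (Fin d → ℝ) → ℝ :=
    fun x => ∑ t ∈ (Finset.univ : Finset (Fin d)).powerset,
      f x ^ 2 * Real.exp (-(dot (fun j => if j ∈ t then -a0 else a0) x)) with hD
  have hDint : Integrable D μ := integrable_finset_sum _ fun t _ => h02 _
  refine hDint.mono' ?_ (Filter.Eventually.of_forall fun x => ?_)
  · exact ((hf.pow_const 2).mul
      (Real.measurable_exp.comp (measurable_nrm.const_mul a0))).aestronglyMeasurable
  · rw [Real.norm_eq_abs, abs_of_nonneg (mul_nonneg (sq_nonneg _) (Real.exp_nonneg _))]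
    have key : Real.exp (a0 * nrm x)
        ≤ ∏ j, (Real.exp (a0 * x j) + Real.exp (-(a0 * x j))) := by
      have h1 : a0 * nrm x ≤ ∑ j, a0 * |x j| := by
        rw [← Finset.mul_sum]
        exact mul_le_mul_of_nonneg_left (nrm_le_sum_abs x) ha0
      calc Real.exp (a0 * nrm x) ≤ Real.exp (∑ j, a0 * |x j|) := Real.exp_le_exp.2 h1
        _ = ∏ j, Real.exp (a0 * |x j|) := Real.exp_sum _ _
        _ ≤ ∏ j, (Real.exp (a0 * x j) + Real.exp (-(a0 * x j))) := by
            apply Finset.prod_le_prod (fun j _ => Real.exp_nonneg _) (fun j _ => ?_)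
            rcases abs_cases (x j) with ⟨h, _⟩ | ⟨h, _⟩
            · rw [h] at *
              nlinarith [Real.exp_nonneg (-(a0 * x j)), le_refl (Real.exp (a0 * x j))]
            · rw [h, mul_neg]
              nlinarith [Real.exp_nonneg (a0 * x j), le_refl (Real.exp (-(a0 * x j)))]
    have expand : D x = f x ^ 2 * ∏ j, (Real.exp (a0 * x j) + Real.exp (-(a0 * x j))) := by
      rw [hD]
      simp only
      rw [← Finset.mul_sum]
      congr 1
      rw [Finset.prod_add]
      apply Finset.sum_congr rfl
      intro t _
      rw [← Real.exp_sum, ← Real.exp_sum, ← Real.exp_add]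
      congr 1
      unfold dot
      rw [← Finset.sum_filter_add_sum_filter_not Finset.univ (· ∈ t)
        (fun j => (if j ∈ t then -a0 else a0) * x j)]
      have e1 : Finset.filter (· ∈ t) Finset.univ = t := by
        ext j; simp
      rw [e1]
      rw [neg_add]
      congr 1
      · rw [← Finset.sum_neg_distrib]
        apply Finset.sum_congr rfl
        intro j hj
        rw [if_pos hj]; ring
      · rw [Finset.sdiff_eq_filter, ← Finset.sum_neg_distrib]
        apply Finset.sum_congr rfl
        intro j hj
        rw [Finset.mem_filter] at hj
        rw [if_neg hj.2]
    rw [expand]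
    exact mul_le_mul_of_nonneg_left key (sq_nonneg _)

lemma w_pos (hf : Measurable f)
    (h02 : ∀ θ : Fin d → ℝ, Integrable (fun x => f x ^ 2 * Real.exp (-(dot θ x))) μ)
    (h01 : 0 < μ {x | f x ≠ 0}) :
    0 < ∫ x, f x ^ 2 * Real.exp (-(nrm x ^ 2) / 2) ∂μ := by
  rw [integral_pos_iff_support_of_nonneg
    (fun x => mul_nonneg (sq_nonneg _) (Real.exp_nonneg _)) (int_floor hf h02)]
  have : Function.support (fun x => f x ^ 2 * Real.exp (-(nrm x ^ 2) / 2)) = {x | f x ≠ 0} := by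
    ext x
    simp [Function.mem_support, mul_ne_zero_iff, Real.exp_ne_zero, pow_eq_zero_iff]
  rwa [this]

end Integrability

set_option maxHeartbeats 1600000 in
/-- Under (0.1) and (0.2), `ϑ_n^{f,A} → ϑ_⋆^{f,A}` and `v_n^{f,A}(ϑ_n^{f,A}) → v^{f,A}(ϑ_⋆^{f,A})`
almost surely. -/
theorem stmt2 {d d' : ℕ} (hd : d' ≤ d)
    {Ω : Type*} [MeasurableSpace Ω] (P : Measure Ω) [IsProbabilityMeasure P]
    (Gs : ℕ → Ω → Fin d → ℝ)
    (hGmeas : ∀ i, Measurable (Gs i))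
    (hGindep : iIndepFun Gs P)
    (hGlaw : ∀ i, Measure.map (Gs i) P = stdGaussian d)
    (f : (Fin d → ℝ) → ℝ) (hf : Measurable f)
    (h01 : 0 < stdGaussian d {x | f x ≠ 0})
    (h02 : ∀ θ : Fin d → ℝ,
      Integrable (fun x => f x ^ 2 * Real.exp (-(dot θ x))) (stdGaussian d))
    (A : Matrix (Fin d) (Fin d') ℝ) (hA : A.rank = d')
    (ϑstar : Fin d' → ℝ) (hstar : ∀ ϑ, vFA A f ϑstar ≤ vFA A f ϑ)
    (ϑn : ℕ → Ω → Fin d' → ℝ) (hϑmeas : ∀ n, Measurable (ϑn n))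
    (hϑmin : ∀ n ω, (∃ i < n, f (Gs i ω) ≠ 0) →
      ∀ ϑ, vnFA Gs A f n ω (ϑn n ω) ≤ vnFA Gs A f n ω ϑ) :
    ∀ᵐ ω ∂P, Tendsto (fun n => ϑn n ω) atTop (𝓝 ϑstar) ∧
      Tendsto (fun n => vnFA Gs A f n ω (ϑn n ω)) atTop (𝓝 (vFA A f ϑstar)) := by
  classical
  obtain ⟨c, hc0, hc⟩ := exists_mulVec_lower A hA
  obtain ⟨K, hK0, hK⟩ := exists_mulVec_upper A
  set w := ∫ x, f x ^ 2 * Real.exp (-(nrm x ^ 2) / 2) ∂ stdGaussian d with hw_def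
  have hw : 0 < w := w_pos hf h02 h01
  set mstar := vFA A f ϑstar with hmstar_def
  have hvFA_eq : ∀ ϑ : Fin d' → ℝ,
      vFA A f ϑ = ∫ x, Fterm f x (A.mulVec ϑ) ∂ stdGaussian d := fun _ => rfl
  have hwm : w ≤ mstar := by
    rw [hmstar_def, hvFA_eq]
    exact integral_mono (int_floor hf h02) (int_Fterm hf h02 (A.mulVec ϑstar))
      (fun x => Fterm_floor f x (A.mulVec ϑstar))
  have hm : 0 < mstar := lt_of_lt_of_le hw hwm
  set B := 2 * (mstar + 1) / w with hB_def
  have hB1 : 1 < B := by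
    rw [hB_def, lt_div_iff₀ hw]; linarith
  have hBpos : 0 < B := lt_trans one_pos hB1
  have hlogB : 0 ≤ Real.log B := Real.log_nonneg (le_of_lt hB1)
  set R := Real.sqrt (4 * c ^ 2 * Real.log B) with hR_def
  have hR0 : 0 ≤ R := Real.sqrt_nonneg _
  set a0 := K * (nrm ϑstar + Real.sqrt d' * (R + 2)) with ha0_def
  have ha00 : 0 ≤ a0 :=
    mul_nonneg hK0 (add_nonneg (nrm_nonneg _)
      (mul_nonneg (Real.sqrt_nonneg _) (by linarith)))
  set U := ∫ x, f x ^ 2 * Real.exp (a0 * nrm x) ∂ stdGaussian d with hU_def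
  have hU0 : 0 ≤ U :=
    integral_nonneg fun x => mul_nonneg (sq_nonneg _) (Real.exp_nonneg _)
  set M := Real.exp (a0 ^ 2 / 2) * (U + 1) with hM_def
  have hM0 : 0 ≤ M := by positivity
  set p : (Fin d' → ℚ) → (Fin d' → ℝ) := fun q => ϑstar + fun j => (q j : ℝ) with hp_def
  have hp0 : p 0 = ϑstar := by
    funext j; simp [hp_def]
  -- the almost sure events
  have E0 := slln P Gs hGmeas hGindep hGlaw (fun x => f x ^ 2 * Real.exp (-(nrm x ^ 2) / 2))
    ((hf.pow_const 2).mul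
      (Real.measurable_exp.comp (((measurable_nrm.pow_const 2).neg).div_const 2)))
    (int_floor hf h02)
  have E2 := slln P Gs hGmeas hGindep hGlaw (fun x => f x ^ 2 * Real.exp (a0 * nrm x))
    ((hf.pow_const 2).mul (Real.measurable_exp.comp (measurable_nrm.const_mul a0)))
    (int_upper hf h02 ha00)
  have E1 : ∀ᵐ ω ∂P, ∀ q : Fin d' → ℚ,
      Tendsto (fun n : ℕ => (1 / n : ℝ) * ∑ i ∈ Finset.range n, Fterm f (Gs i ω) (A.mulVec (p q)))
        atTop (𝓝 (vFA A f (p q))) := by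
    rw [ae_all_iff]
    intro q
    have := slln P Gs hGmeas hGindep hGlaw (fun x => Fterm f x (A.mulVec (p q)))
      (measurable_Fterm hf _) (int_Fterm hf h02 _)
    rw [← hvFA_eq] at this
    exact this
  filter_upwards [E0, E1, E2] with ω h1 h2 h3
  -- fix ω; introduce notation
  set xs : ℕ → Fin d → ℝ := fun i => Gs i ω with hxs_def
  set Φ : ℕ → (Fin d' → ℝ) → ℝ := fun n => samp f A xs n with hΦ_def
  have hΦeq : ∀ n ϑ, vnFA Gs A f n ω ϑ = Φ n ϑ := fun n ϑ => rfl
  set W : ℕ → ℝ :=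
    fun n => (1 / n : ℝ) * ∑ i ∈ Finset.range n, f (xs i) ^ 2
      * Real.exp (-(nrm (xs i) ^ 2) / 2) with hW_def
  set V : ℕ → ℝ :=
    fun n => (1 / n : ℝ) * ∑ i ∈ Finset.range n, f (xs i) ^ 2
      * Real.exp (a0 * nrm (xs i)) with hV_def
  have hWlim : Tendsto W atTop (𝓝 w) := h1
  have hVlim : Tendsto V atTop (𝓝 U) := h3
  set θhat : ℕ → Fin d' → ℝ := fun n => ϑn n ω with hθhat_def
  have hΦstar : Tendsto (fun n => Φ n ϑstar) atTop (𝓝 mstar) := by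
    have := h2 0
    rw [hp0] at this
    exact this
  -- eventually the empirical minimiser property holds
  have hev_min : ∀ᶠ n in atTop, ∀ ϑ, Φ n (θhat n) ≤ Φ n ϑ := by
    filter_upwards [hWlim.eventually (eventually_gt_nhds (by linarith : w/2 < w))] with n hn
    have hex : ∃ i < n, f (Gs i ω) ≠ 0 := by
      by_contra hcon
      push_neg at hcon
      have : W n = 0 := by
        rw [hW_def]
        simp only
        rw [Finset.sum_eq_zero, mul_zero]
        intro i hi
        rw [hcon i (Finset.mem_range.1 hi)]
        ring
      rw [this] at hn
      linarith
    intro ϑ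
    have := hϑmin n ω hex ϑ
    rwa [hΦeq, hΦeq] at this
  -- the key inequality
  have hkey : ∀ n, (∀ ϑ, Φ n (θhat n) ≤ Φ n ϑ) → w/2 ≤ W n →
      Φ n (θhat n) * Real.exp (nrm (θhat n - ϑstar) ^ 2 / (4 * c ^ 2)) ≤ Φ n ϑstar := by
    intro n hmin hWn
    have hfloor : W n ≤ Φ n (θhat n) := samp_floor f A xs n _
    have hΦhat_pos : 0 < Φ n (θhat n) := lt_of_lt_of_le (by linarith) hfloor
    have hΦstar0 : 0 ≤ Φ n ϑstar := samp_nonneg f A xs n _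
    set δA := nrm (A.mulVec (θhat n - ϑstar)) ^ 2 / 8 with hδA_def
    have hδA0 : 0 ≤ δA := by positivity
    have hstar1 : Φ n ((2:ℝ)⁻¹ • (θhat n + ϑstar))
        ≤ Real.exp (-δA) * (Real.sqrt (Φ n (θhat n)) * Real.sqrt (Φ n ϑstar)) := by
      have := samp_star f A xs n (θhat n) ϑstar
      rw [hδA_def]
      convert this using 3 <;> ring
    have hmin1 : Φ n (θhat n) ≤ Φ n ((2:ℝ)⁻¹ • (θhat n + ϑstar)) := hmin _
    have hchain : Φ n (θhat n)
        ≤ Real.exp (-δA) * (Real.sqrt (Φ n (θhat n)) * Real.sqrt (Φ n ϑstar)) :=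
      le_trans hmin1 hstar1
    have hsq : Real.sqrt (Φ n (θhat n)) > 0 := Real.sqrt_pos.2 hΦhat_pos
    have hs1 : Real.sqrt (Φ n (θhat n)) ≤ Real.exp (-δA) * Real.sqrt (Φ n ϑstar) := by
      have hss : Real.sqrt (Φ n (θhat n)) * Real.sqrt (Φ n (θhat n)) = Φ n (θhat n) :=
        Real.mul_self_sqrt (le_of_lt hΦhat_pos)
      nlinarith [hchain, hss, hsq, Real.sqrt_nonneg (Φ n ϑstar), Real.exp_nonneg (-δA)]
    have hs2 : Φ n (θhat n) ≤ Real.exp (-(2*δA)) * Φ n ϑstar := by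
      have hb0 : 0 ≤ Real.exp (-δA) * Real.sqrt (Φ n ϑstar) :=
        mul_nonneg (Real.exp_nonneg _) (Real.sqrt_nonneg _)
      have := mul_le_mul hs1 hs1 (Real.sqrt_nonneg _) hb0
      rw [Real.mul_self_sqrt (le_of_lt hΦhat_pos)] at this
      calc Φ n (θhat n) ≤ Real.exp (-δA) * Real.sqrt (Φ n ϑstar)
            * (Real.exp (-δA) * Real.sqrt (Φ n ϑstar)) := this
        _ = Real.exp (-δA) * Real.exp (-δA)
            * (Real.sqrt (Φ n ϑstar) * Real.sqrt (Φ n ϑstar)) := by ring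
        _ = Real.exp (-(2*δA)) * Φ n ϑstar := by
            rw [← Real.exp_add, Real.mul_self_sqrt hΦstar0]
            ring_nf
    -- convert to the exp-multiplied form
    have hq : nrm (θhat n - ϑstar) ^ 2 / (4 * c ^ 2) ≤ 2 * δA := by
      have h7 := hc (θhat n - ϑstar)
      have h8 : nrm (θhat n - ϑstar) ^ 2 ≤ c^2 * nrm (A.mulVec (θhat n - ϑstar)) ^ 2 := by
        have h9 := nrm_nonneg (θhat n - ϑstar)
        have h10 := nrm_nonneg (A.mulVec (θhat n - ϑstar))
        nlinarith
      rw [hδA_def, div_le_iff₀ (by positivity)]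
      nlinarith [sq_nonneg c]
    calc Φ n (θhat n) * Real.exp (nrm (θhat n - ϑstar) ^ 2 / (4 * c ^ 2))
        ≤ Φ n (θhat n) * Real.exp (2*δA) :=
          mul_le_mul_of_nonneg_left (Real.exp_le_exp.2 hq) (le_of_lt hΦhat_pos)
      _ ≤ Real.exp (-(2*δA)) * Φ n ϑstar * Real.exp (2*δA) :=
          mul_le_mul_of_nonneg_right hs2 (Real.exp_nonneg _)
      _ = Φ n ϑstar * (Real.exp (-(2*δA)) * Real.exp (2*δA)) := by ring
      _ = Φ n ϑstar := by rw [← Real.exp_add]; simp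
  -- eventual boundedness of the minimisers
  have hbound : ∀ᶠ n in atTop, nrm (θhat n - ϑstar) ≤ R := by
    filter_upwards [hev_min,
      hWlim.eventually (eventually_ge_nhds (by linarith : w/2 < w)),
      hΦstar.eventually (eventually_le_nhds (by linarith : mstar < mstar + 1))]
      with n hmin hWn hplus
    have hfloor : W n ≤ Φ n (θhat n) := samp_floor f A xs n _
    have hkey1 := hkey n hmin hWn
    set q := nrm (θhat n - ϑstar) ^ 2 / (4 * c ^ 2) with hq_def
    have hq0 : 0 ≤ q := by positivity
    have hexpB : Real.exp q ≤ B := by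
      have h5 : w/2 * Real.exp q ≤ Φ n (θhat n) * Real.exp q :=
        mul_le_mul_of_nonneg_right (by linarith) (Real.exp_nonneg _)
      have h6 : w/2 * Real.exp q ≤ mstar + 1 := by linarith
      rw [hB_def]
      rw [le_div_iff₀ hw]
      nlinarith [Real.exp_nonneg q]
    have hlog : q ≤ Real.log B := by
      rw [Real.le_log_iff_exp_le hBpos]
      exact hexpB
    have hsq : nrm (θhat n - ϑstar) ^ 2 ≤ 4 * c ^ 2 * Real.log B := by
      rw [hq_def, div_le_iff₀ (by positivity)] at hlog
      nlinarith
    calc nrm (θhat n - ϑstar) = Real.sqrt (nrm (θhat n - ϑstar) ^ 2) :=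
          (Real.sqrt_sq (nrm_nonneg _)).symm
      _ ≤ Real.sqrt (4 * c ^ 2 * Real.log B) := Real.sqrt_le_sqrt hsq
      _ = R := by rw [hR_def]
  -- eventual upper bound on the ball
  have hupb : ∀ᶠ n in atTop, ∀ ϑ : Fin d' → ℝ, ‖ϑ - ϑstar‖ ≤ R + 2 → Φ n ϑ ≤ M := by
    filter_upwards [hVlim.eventually (eventually_le_nhds (by linarith : U < U + 1))]
      with n hV ϑ hball
    have hAv : nrm (A.mulVec ϑ) ≤ a0 := by
      have ht : nrm ϑ ≤ nrm ϑstar + Real.sqrt d' * (R + 2) := by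
        have : ϑ = ϑstar + (ϑ - ϑstar) := by abel
        rw [this]
        calc nrm (ϑstar + (ϑ - ϑstar)) ≤ nrm ϑstar + nrm (ϑ - ϑstar) := nrm_add_le _ _
          _ ≤ nrm ϑstar + Real.sqrt d' * ‖ϑ - ϑstar‖ := by
              have := nrm_le_sqrt_card_norm (ϑ - ϑstar)
              linarith
          _ ≤ nrm ϑstar + Real.sqrt d' * (R + 2) := by
              have h5 : Real.sqrt d' * ‖ϑ - ϑstar‖ ≤ Real.sqrt d' * (R + 2) :=
                mul_le_mul_of_nonneg_left hball (Real.sqrt_nonneg _)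
              linarith
      calc nrm (A.mulVec ϑ) ≤ K * nrm ϑ := hK ϑ
        _ ≤ K * (nrm ϑstar + Real.sqrt d' * (R + 2)) := mul_le_mul_of_nonneg_left ht hK0
        _ = a0 := by rw [ha0_def]
    calc Φ n ϑ ≤ Real.exp (a0 ^ 2 / 2) * V n := samp_upper f A xs n hAv
      _ ≤ Real.exp (a0 ^ 2 / 2) * (U + 1) :=
          mul_le_mul_of_nonneg_left hV (Real.exp_nonneg _)
      _ = M := by rw [hM_def]
  -- eventual Lipschitz property on the ball of radius R+1
  have hLip : ∀ᶠ n in atTop, ∀ u v : Fin d' → ℝ, ‖u - ϑstar‖ ≤ R + 1 → ‖v - ϑstar‖ ≤ R + 1 →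
      Φ n v - Φ n u ≤ M * ‖v - u‖ := by
    filter_upwards [hupb] with n hupn u v hu hv
    refine lip_of_convex (Φ n) (fun u v a b ha hb hab => samp_convex f A xs n u v ha hb hab)
      (samp_nonneg f A xs n) hM0 (fun ζ hζ => hupn ζ (by linarith)) hu hv
  -- liminf bound
  have hliminf : ∀ ε : ℝ, 0 < ε → ∀ᶠ n in atTop, mstar - ε ≤ Φ n (θhat n) := by
    intro ε hε
    set δ0 := min 1 (ε / (2 * (M + 1))) with hδ0_def
    have hδ0pos : 0 < δ0 := lt_min one_pos (by positivity)
    have hδ01 : δ0 ≤ 1 := min_le_left _ _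
    have hδ0ε : M * δ0 ≤ ε / 2 := by
      have h5 : δ0 ≤ ε / (2 * (M + 1)) := min_le_right _ _
      have h6 : M * δ0 ≤ M * (ε / (2 * (M + 1))) := mul_le_mul_of_nonneg_left h5 hM0
      have h7 : M * (ε / (2 * (M + 1))) ≤ ε / 2 := by
        rw [← mul_div_assoc, div_le_div_iff₀ (by positivity) (by norm_num)]
        nlinarith
      linarith
    -- finite subcover
    obtain ⟨Q, hQ⟩ : ∃ Q : Finset (Fin d' → ℚ),
        Metric.closedBall ϑstar R ⊆ ⋃ q ∈ Q, Metric.ball (p q) δ0 := by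
      have hcpt : IsCompact (Metric.closedBall ϑstar R) := isCompact_closedBall _ _
      have hcov : Metric.closedBall ϑstar R ⊆ ⋃ q : Fin d' → ℚ, Metric.ball (p q) δ0 := by
        intro z _
        have hrat : ∀ j, ∃ qj : ℚ, |z j - ϑstar j - (qj:ℝ)| < δ0 := by
          intro j
          obtain ⟨qj, hqj⟩ := exists_rat_near (z j - ϑstar j) hδ0pos
          exact ⟨qj, hqj⟩
        choose q hq using hrat
        refine Set.mem_iUnion.2 ⟨q, ?_⟩
        rw [Metric.mem_ball, dist_pi_lt_iff hδ0pos]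
        intro j
        rw [Real.dist_eq]
        have hpq : p q j = ϑstar j + (q j : ℝ) := rfl
        rw [hpq, show z j - (ϑstar j + (q j:ℝ)) = z j - ϑstar j - (q j:ℝ) by ring]
        exact hq j
      exact hcpt.elim_finite_subcover (fun q : Fin d' → ℚ => Metric.ball (p q) δ0)
        (fun q => Metric.isOpen_ball) hcov
    have hnet : ∀ᶠ n in atTop, ∀ q ∈ Q, mstar - ε/2 ≤ Φ n (p q) := by
      rw [eventually_all_finset]
      intro q _
      refine (h2 q).eventually (eventually_ge_nhds ?_)
      have := hstar (p q)
      linarith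
    filter_upwards [hnet, hbound, hLip] with n hn hbn hlipn
    have hmem : θhat n ∈ Metric.closedBall ϑstar R := by
      rw [Metric.mem_closedBall, dist_eq_norm]
      exact le_trans (norm_le_nrm _) hbn
    obtain ⟨q, hqQ, hqball⟩ := Set.mem_iUnion₂.1 (hQ hmem)
    rw [Metric.mem_ball, dist_eq_norm] at hqball
    have hqin : ‖p q - ϑstar‖ ≤ R + 1 := by
      have h5 : ‖p q - ϑstar‖ ≤ ‖p q - θhat n‖ + ‖θhat n - ϑstar‖ :=
        norm_sub_le_norm_sub_add_norm_sub _ _ _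
      have h6 : ‖p q - θhat n‖ = ‖θhat n - p q‖ := norm_sub_rev _ _
      have h7 : ‖θhat n - ϑstar‖ ≤ R := le_trans (norm_le_nrm _) hbn
      rw [h6] at h5
      linarith [le_of_lt hqball]
    have hhatin : ‖θhat n - ϑstar‖ ≤ R + 1 := by
      have := le_trans (norm_le_nrm _) hbn
      linarith
    have hlip2 : Φ n (p q) - Φ n (θhat n) ≤ M * ‖p q - θhat n‖ :=
      hlipn (θhat n) (p q) hhatin hqin
    have h8 : ‖p q - θhat n‖ ≤ δ0 := by
      rw [norm_sub_rev]
      exact le_of_lt hqball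
    have h9 : M * ‖p q - θhat n‖ ≤ M * δ0 := mul_le_mul_of_nonneg_left h8 hM0
    have h10 := hn q hqQ
    linarith
  -- convergence of the values
  have hval : Tendsto (fun n => Φ n (θhat n)) atTop (𝓝 mstar) := by
    rw [Metric.tendsto_atTop]
    intro ε hε
    have hup : ∀ᶠ n in atTop, Φ n (θhat n) < mstar + ε := by
      filter_upwards [hev_min,
        hΦstar.eventually (eventually_lt_nhds (by linarith : mstar < mstar + ε))] with n hmin h5
      exact lt_of_le_of_lt (hmin ϑstar) h5
    have hcomb := (hliminf (ε/2) (by positivity)).and hup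
    rw [eventually_atTop] at hcomb
    obtain ⟨N, hN⟩ := hcomb
    refine ⟨N, fun n hn => ?_⟩
    obtain ⟨hlo, hhi⟩ := hN n hn
    rw [Real.dist_eq, abs_lt]
    constructor <;> linarith
  -- convergence of the minimisers
  have hθ : Tendsto (fun n => θhat n) atTop (𝓝 ϑstar) := by
    rw [Metric.tendsto_atTop]
    intro ε hε
    set ρ := ε ^ 2 / (4 * c ^ 2) with hρ_def
    have hρpos : 0 < ρ := by positivity
    have hX1 : 1 < Real.exp ρ := by
      rw [show (1:ℝ) = Real.exp 0 from (Real.exp_zero).symm]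
      exact Real.exp_lt_exp.2 hρpos
    set ε' := mstar * (Real.exp ρ - 1) / (2 * (1 + Real.exp ρ)) with hε'_def
    have hε'pos : 0 < ε' := by
      apply div_pos
      · apply mul_pos hm; linarith
      · positivity
    have hcomb := ((hliminf ε' hε'pos).and ((hev_min.and
      (hWlim.eventually (eventually_ge_nhds (by linarith : w/2 < w)))).and
      (hΦstar.eventually (eventually_le_nhds (by linarith : mstar < mstar + ε')))))
    rw [eventually_atTop] at hcomb
    obtain ⟨N, hN⟩ := hcomb
    refine ⟨N, fun n hn => ?_⟩
    obtain ⟨hlo, ⟨hmin, hWn⟩, hhi⟩ := hN n hn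
    have hkey1 := hkey n hmin hWn
    -- show nrm (θhat n - ϑstar) < ε
    by_contra hcon
    rw [not_lt] at hcon
    have hnrmge : ε ≤ nrm (θhat n - ϑstar) :=
      le_trans hcon (by rw [dist_eq_norm]; exact norm_le_nrm _)
    have hρle : ρ ≤ nrm (θhat n - ϑstar) ^ 2 / (4 * c ^ 2) := by
      rw [hρ_def, div_le_div_iff₀ (by positivity) (by positivity)]
      have h9 : ε^2 ≤ nrm (θhat n - ϑstar)^2 := by
        nlinarith [le_of_lt hε, nrm_nonneg (θhat n - ϑstar)]
      nlinarith [sq_nonneg c, h9]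
    have hΦhat0 : 0 ≤ Φ n (θhat n) := samp_nonneg f A xs n _
    have h5 : Φ n (θhat n) * Real.exp ρ ≤ Φ n ϑstar := by
      calc Φ n (θhat n) * Real.exp ρ
          ≤ Φ n (θhat n) * Real.exp (nrm (θhat n - ϑstar) ^ 2 / (4 * c ^ 2)) :=
            mul_le_mul_of_nonneg_left (Real.exp_le_exp.2 hρle) hΦhat0
        _ ≤ Φ n ϑstar := hkey1
    -- numeric contradiction
    have h6 : (mstar - ε') * Real.exp ρ ≤ mstar + ε' := by
      have h7 : (mstar - ε') * Real.exp ρ ≤ Φ n (θhat n) * Real.exp ρ :=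
        mul_le_mul_of_nonneg_right (by linarith) (Real.exp_nonneg _)
      linarith
    have hε'eq : ε' * (2 * (1 + Real.exp ρ)) = mstar * (Real.exp ρ - 1) := by
      rw [hε'_def]
      field_simp
    nlinarith [hε'eq, hX1, hm, h6]
  refine ⟨hθ, ?_⟩
  have : (fun n => vnFA Gs A f n ω (ϑn n ω)) = fun n => Φ n (θhat n) := by
    funext n; rw [hΦeq]
  rw [this]
  exact hval

end
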